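/- Let q \in (0,1] and \alpha \in (0,1), and define T(w) = q(1-\alpha)w^2 + 1 - q for w \in [0,1]. Then the fixed points of T in \mathbb{R} are (1 \pm \sqrt{1 - 4q(1-q)(1-\alpha)})/(2q(1-\alpha)); writing \bar{W} = (1 - \sqrt{1 - 4q(1-q)(1-\alpha)})/(2q(1-\alpha)) for the smaller one, we have \bar{W} \in [0,1], q(1+\bar{W}) \le 1, and |T(w) - \bar{W}| \le (1-\alpha)|w - \bar{W}| for every w \in [0,1]. Consequently, every sequence (W_k) with W_0 \in [0,1] and W_{k+1} = T(W_k) satisfies |W_k - \bar{W}| \le 2(1-\alpha)^k for all k \in \mathbb{N}. -/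

import Mathlib

/-- The quadratic map `T(w) = q(1-α)w² + 1 - q` arising from the Galton-Watson recursion. -/
noncomputable def T (q α w : ℝ) : ℝ := q * (1 - α) * w ^ 2 + 1 - q

/-- The smaller fixed point `W̄` of `T`. -/
noncomputable def Wbar (q α : ℝ) : ℝ :=
  (1 - Real.sqrt (1 - 4 * q * (1 - q) * (1 - α))) / (2 * q * (1 - α))

theorem stmt19 (q α : ℝ) (hq : q ∈ Set.Ioc (0 : ℝ) 1) (hα : α ∈ Set.Ioo (0 : ℝ) 1) :
    -- the fixed points of T in ℝ are (1 ± √(1 - 4q(1-q)(1-α)))/(2q(1-α))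
    (∀ w : ℝ, T q α w = w ↔
      w = Wbar q α ∨
      w = (1 + Real.sqrt (1 - 4 * q * (1 - q) * (1 - α))) / (2 * q * (1 - α))) ∧
    Wbar q α ∈ Set.Icc (0 : ℝ) 1 ∧
    q * (1 + Wbar q α) ≤ 1 ∧
    (∀ w ∈ Set.Icc (0 : ℝ) 1, |T q α w - Wbar q α| ≤ (1 - α) * |w - Wbar q α|) ∧
    (∀ W : ℕ → ℝ, W 0 ∈ Set.Icc (0 : ℝ) 1 → (∀ k, W (k + 1) = T q α (W k)) →
      ∀ k : ℕ, |W k - Wbar q α| ≤ 2 * (1 - α) ^ k) := by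
  obtain ⟨hq0, hq1⟩ := hq
  obtain ⟨hα0, hα1⟩ := hα
  have hc : 0 < q * (1 - α) := mul_pos hq0 (by linarith)
  have hc2 : (0:ℝ) < 2 * q * (1 - α) := by nlinarith
  have hD0 : (0:ℝ) ≤ 1 - 4 * q * (1 - q) * (1 - α) := by nlinarith [sq_nonneg (2*q - 1)]
  set s := Real.sqrt (1 - 4 * q * (1 - q) * (1 - α)) with hsdef
  have hs : s ^ 2 = 1 - 4 * q * (1 - q) * (1 - α) := Real.sq_sqrt hD0
  have hs0 : 0 ≤ s := Real.sqrt_nonneg _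
  have hs1 : s ≤ 1 := by
    rw [hsdef]
    have h := Real.sqrt_le_sqrt (show 1 - 4 * q * (1 - q) * (1 - α) ≤ 1 by nlinarith)
    rwa [Real.sqrt_one] at h
  have hW : Wbar q α = (1 - s) / (2 * q * (1 - α)) := rfl
  -- factorization of T w - w
  have factor : ∀ w : ℝ, T q α w - w =
      q * (1 - α) * (w - (1 - s) / (2 * q * (1 - α))) *
        (w - (1 + s) / (2 * q * (1 - α))) := by
    intro w
    simp only [T]
    field_simp
    ring_nf
    nlinarith [hs]
  have hiff : ∀ w : ℝ, T q α w = w ↔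
      w = Wbar q α ∨ w = (1 + s) / (2 * q * (1 - α)) := by
    intro w
    rw [hW]
    constructor
    · intro h
      have h0 : q * (1 - α) * (w - (1 - s) / (2 * q * (1 - α))) *
          (w - (1 + s) / (2 * q * (1 - α))) = 0 := by
        rw [← factor w, h, sub_self]
      rcases mul_eq_zero.mp h0 with h1 | h1
      · rcases mul_eq_zero.mp h1 with h2 | h2
        · exact absurd h2 hc.ne'
        · exact Or.inl (sub_eq_zero.mp h2)
      · exact Or.inr (sub_eq_zero.mp h1)
    · intro h
      have hz : T q α w - w = 0 := by
        rcases h with h | h <;> rw [factor w, h] <;> ring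
      linarith
  -- Wbar bounds
  have hWmem : Wbar q α ∈ Set.Icc (0:ℝ) 1 := by
    rw [hW]
    constructor
    · exact div_nonneg (by linarith) hc2.le
    · rw [div_le_one hc2]
      nlinarith [hs, hs0, mul_pos (mul_pos hq0 hα0) hc]
  have hqW : q * (1 + Wbar q α) ≤ 1 := by
    have key : 1 - s ≤ 2 * (1 - α) * (1 - q) := by
      have ha : (0:ℝ) ≤ (1 - α) * (1 - q) * ((1 - q) * α) :=
        mul_nonneg (mul_nonneg (by linarith) (by linarith))
          (mul_nonneg (by linarith) hα0.le)
      nlinarith [hs, hs0, ha]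
    have e : q * Wbar q α = (1 - s) / (2 * (1 - α)) := by
      have h2a : (2:ℝ) * (1 - α) ≠ 0 := ne_of_gt (by linarith)
      rw [hW]
      field_simp
    have h3 : (1 - s) / (2 * (1 - α)) ≤ 1 - q := by
      rw [div_le_iff₀ (by linarith : (0:ℝ) < 2 * (1 - α))]
      nlinarith [key]
    rw [mul_add, mul_one, e]
    linarith
  -- contraction
  have hfix : T q α (Wbar q α) = Wbar q α := (hiff _).mpr (Or.inl rfl)
  have hcontr : ∀ w ∈ Set.Icc (0:ℝ) 1,
      |T q α w - Wbar q α| ≤ (1 - α) * |w - Wbar q α| := by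
    rintro w ⟨hw0, hw1⟩
    have key : T q α w - Wbar q α =
        (q * (1 - α) * (w + Wbar q α)) * (w - Wbar q α) := by
      simp only [T] at hfix ⊢
      linear_combination hfix
    have hnn : (0:ℝ) ≤ q * (1 - α) * (w + Wbar q α) :=
      mul_nonneg hc.le (by linarith [hWmem.1])
    rw [key, abs_mul, abs_of_nonneg hnn]
    apply mul_le_mul_of_nonneg_right _ (abs_nonneg _)
    nlinarith [mul_le_mul_of_nonneg_left hqW (by linarith : (0:ℝ) ≤ 1 - α),
      mul_nonneg hc.le (show (0:ℝ) ≤ 1 - w by linarith)]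
  refine ⟨hiff, hWmem, hqW, hcontr, ?_⟩
  intro W hW0 hrec
  have hmap : ∀ w ∈ Set.Icc (0:ℝ) 1, T q α w ∈ Set.Icc (0:ℝ) 1 := by
    rintro w ⟨hw0, hw1⟩
    simp only [T, Set.mem_Icc]
    have h1w : (0:ℝ) ≤ (1 - w) * (1 + w) := mul_nonneg (by linarith) (by linarith)
    constructor
    · nlinarith [mul_nonneg hw0 hw0]
    · nlinarith [mul_nonneg hc.le h1w]
  have main : ∀ k : ℕ, W k ∈ Set.Icc (0:ℝ) 1 ∧ |W k - Wbar q α| ≤ 2 * (1 - α) ^ k := by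
    intro k
    induction k with
    | zero =>
      refine ⟨hW0, ?_⟩
      rw [abs_le]
      simp only [pow_zero, mul_one]
      constructor <;> linarith [hW0.1, hW0.2, hWmem.1, hWmem.2]
    | succ n ih =>
      obtain ⟨hmem, hbound⟩ := ih
      refine ⟨by rw [hrec n]; exact hmap _ hmem, ?_⟩
      rw [hrec n]
      calc |T q α (W n) - Wbar q α| ≤ (1 - α) * |W n - Wbar q α| := hcontr _ hmem
        _ ≤ (1 - α) * (2 * (1 - α) ^ n) :=
            mul_le_mul_of_nonneg_left hbound (by linarith)
        _ = 2 * (1 - α) ^ (n + 1) := by ring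
  exact fun k => (main k).2
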